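/- For unit-norm features with a labeling y, the averaged normalization term of the contrastive loss is bounded below in terms of pairwise squared distances and positive-pair similarities: if for each i the set of negatives N_i = {k ∈ {1,...,n} : y_k ≠ y_i} is nonempty and satisfies N_i ⊆ A_i, then (1/n) ∑_{i=1}^n log( ∑_{k ∈ A_i} exp(⟨z_i, z_k⟩/τ) ) ≥ (1/n) ∑_{i=1}^n log |N_i| + (1/(n τ)) ∑_{i=1}^n (1/|N_i|) · ( n − (1/2) ∑_{k=1}^n ‖z_i − z_k‖² − ∑_{k : y_k = y_i} ⟨z_i, z_k⟩ ). -/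

import Mathlib

open RealInnerProductSpace Finset

lemma log_sum_exp_ge_aux {α : Type*} (N : Finset α) (hne : N.Nonempty) (a : α → ℝ) :
    Real.log (N.card : ℝ) + (1 / (N.card : ℝ)) * ∑ k ∈ N, a k
      ≤ Real.log (∑ k ∈ N, Real.exp (a k)) := by
  have hm : (0 : ℝ) < N.card := by exact_mod_cast Finset.card_pos.mpr hne
  have hjen :
      Real.exp (∑ k ∈ N, (1 / (N.card : ℝ)) • a k)
        ≤ ∑ k ∈ N, (1 / (N.card : ℝ)) * Real.exp (a k) := by
    exact convexOn_exp.map_sum_le (fun i _ => by positivity)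
      (by rw [Finset.sum_const, nsmul_eq_mul]; field_simp) (fun i _ => trivial)
  simp only [smul_eq_mul] at hjen
  rw [← Finset.mul_sum] at hjen
  have h1 : (N.card : ℝ) * Real.exp ((1 / (N.card : ℝ)) * ∑ k ∈ N, a k)
      ≤ ∑ k ∈ N, Real.exp (a k) := by
    have := mul_le_mul_of_nonneg_left hjen hm.le
    calc (N.card : ℝ) * Real.exp ((1 / (N.card : ℝ)) * ∑ k ∈ N, a k)
        ≤ (N.card : ℝ) * ∑ k ∈ N, (1 / (N.card : ℝ)) * Real.exp (a k) := this
      _ = ∑ k ∈ N, Real.exp (a k) := by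
          rw [← Finset.mul_sum, one_div, mul_inv_cancel_left₀ hm.ne']
  have hpos : (0 : ℝ) < (N.card : ℝ) * Real.exp ((1 / (N.card : ℝ)) * ∑ k ∈ N, a k) := by
    positivity
  have := Real.log_le_log hpos h1
  rwa [Real.log_mul hm.ne' (Real.exp_pos _).ne', Real.log_exp] at this

/-- For unit-norm features with a labeling, the averaged normalization term of the
contrastive loss is bounded below in terms of pairwise squared distances and
positive-pair similarities. -/
theorem normalization_term_lower_bound
    {E : Type*} [NormedAddCommGroup E] [InnerProductSpace ℝ E]
    (n K : ℕ) (z : Fin n → E) (hz : ∀ i, ‖z i‖ = 1)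
    (y : Fin n → Fin K) (τ : ℝ) (hτ : 0 < τ)
    (A : Fin n → Finset (Fin n))
    (hNA : ∀ i k, y k ≠ y i → k ∈ A i)
    (hN : ∀ i, (Finset.univ.filter (fun k => y k ≠ y i)).Nonempty) :
    (1 / (n : ℝ)) * ∑ i, Real.log (∑ k ∈ A i, Real.exp (⟪z i, z k⟫ / τ))
      ≥ (1 / (n : ℝ)) *
          ∑ i, Real.log (((Finset.univ.filter (fun k => y k ≠ y i)).card : ℝ))
        + (1 / ((n : ℝ) * τ)) *
          ∑ i, (1 / (((Finset.univ.filter (fun k => y k ≠ y i)).card : ℝ))) *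
            ((n : ℝ) - (1 / 2) * ∑ k, ‖z i - z k‖ ^ 2
              - ∑ k ∈ Finset.univ.filter (fun k => y k = y i), ⟪z i, z k⟫) := by
  set N : Fin n → Finset (Fin n) := fun i => Finset.univ.filter (fun k => y k ≠ y i) with hNdef
  -- per-index inequality
  have key : ∀ i,
      Real.log ((N i).card : ℝ) + (1 / τ) *
        ((1 / ((N i).card : ℝ)) *
          ((n : ℝ) - (1 / 2) * ∑ k, ‖z i - z k‖ ^ 2
            - ∑ k ∈ Finset.univ.filter (fun k => y k = y i), ⟪z i, z k⟫))
        ≤ Real.log (∑ k ∈ A i, Real.exp (⟪z i, z k⟫ / τ)) := by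
    intro i
    -- Step A: the expression equals the sum of negative-pair inner products
    have hnorm : ∀ k, ‖z i - z k‖ ^ 2 = 2 - 2 * ⟪z i, z k⟫ := by
      intro k
      rw [norm_sub_sq_real, hz, hz]; ring
    have hA : (n : ℝ) - (1 / 2) * ∑ k, ‖z i - z k‖ ^ 2
        - ∑ k ∈ Finset.univ.filter (fun k => y k = y i), ⟪z i, z k⟫
        = ∑ k ∈ N i, ⟪z i, z k⟫ := by
      have hsplit :
          (∑ k ∈ Finset.univ.filter (fun k => y k = y i), ⟪z i, z k⟫)
            + ∑ k ∈ Finset.univ.filter (fun k => ¬ y k = y i), ⟪z i, z k⟫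
            = ∑ k, ⟪z i, z k⟫ := Finset.sum_filter_add_sum_filter_not _ _ _
      have hsum : ∑ k, ‖z i - z k‖ ^ 2 = 2 * n - 2 * ∑ k, ⟪z i, z k⟫ := by
        simp only [hnorm, Finset.sum_sub_distrib, Finset.sum_const, Finset.card_univ,
          Fintype.card_fin, nsmul_eq_mul, ← Finset.mul_sum]
        ring
      have : (N i : Finset (Fin n)) = Finset.univ.filter (fun k => ¬ y k = y i) := rfl
      rw [this, hsum, ← hsplit]
      ring
    rw [hA]
    -- Step B: Jensen on the negatives, then monotonicity to A i
    have hjen := log_sum_exp_ge_aux (N i) (hN i) (fun k => ⟪z i, z k⟫ / τ)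
    have hsub : N i ⊆ A i := by
      intro k hk
      exact hNA i k (by simpa [hNdef] using hk)
    have hmono : (∑ k ∈ N i, Real.exp (⟪z i, z k⟫ / τ))
        ≤ ∑ k ∈ A i, Real.exp (⟪z i, z k⟫ / τ) :=
      Finset.sum_le_sum_of_subset_of_nonneg hsub (fun k _ _ => (Real.exp_pos _).le)
    have hposN : (0 : ℝ) < ∑ k ∈ N i, Real.exp (⟪z i, z k⟫ / τ) :=
      Finset.sum_pos (fun k _ => Real.exp_pos _) (hN i)
    have hlog := Real.log_le_log hposN hmono
    refine le_trans ?_ (le_trans hjen hlog)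
    have : (∑ k ∈ N i, ⟪z i, z k⟫ / τ) = (∑ k ∈ N i, ⟪z i, z k⟫) / τ := by
      rw [Finset.sum_div]
    rw [this]
    apply le_of_eq
    field_simp
  -- assemble
  rw [ge_iff_le]
  have hn0 : (0 : ℝ) ≤ 1 / (n : ℝ) := by positivity
  have hcollect : (1 / (n : ℝ)) *
          ∑ i, Real.log (((N i).card : ℝ))
        + (1 / ((n : ℝ) * τ)) *
          ∑ i, (1 / (((N i).card : ℝ))) *
            ((n : ℝ) - (1 / 2) * ∑ k, ‖z i - z k‖ ^ 2
              - ∑ k ∈ Finset.univ.filter (fun k => y k = y i), ⟪z i, z k⟫)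
      = (1 / (n : ℝ)) * ∑ i,
          (Real.log (((N i).card : ℝ)) + (1 / τ) *
            ((1 / (((N i).card : ℝ))) *
              ((n : ℝ) - (1 / 2) * ∑ k, ‖z i - z k‖ ^ 2
                - ∑ k ∈ Finset.univ.filter (fun k => y k = y i), ⟪z i, z k⟫))) := by
    rw [Finset.sum_add_distrib, mul_add]
    congr 1
    rw [← Finset.mul_sum, one_div ((n : ℝ) * τ), mul_inv]
    ring
  rw [hcollect]
  exact mul_le_mul_of_nonneg_left (Finset.sum_le_sum (fun i _ => key i)) hn0
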